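/- Let x₁ ≥ … ≥ xₙ > 0 and y₁ ≥ … ≥ yₙ > 0 be real numbers such that for every k ≤ n, x₁⋯x_k ≥ y₁⋯y_k. Then for every k ≤ n, x₁ + … + x_k ≥ y₁ + … + y_k. -/

import Mathlib

open scoped BigOperators

/-- Abel summation lemma: a nonincreasing nonnegative weighting of a sequence with
nonnegative partial sums has the stated lower bound. -/
lemma abel_aux (f d : ℕ → ℝ) (hf0 : ∀ i, 0 ≤ f i) (hfm : ∀ i j, i ≤ j → f j ≤ f i) :
    ∀ k, (∀ j ≤ k, 0 ≤ ∑ i ∈ Finset.range j, d i) →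
      f k * (∑ i ∈ Finset.range k, d i) ≤ ∑ i ∈ Finset.range k, f i * d i := by
  intro k
  induction k with
  | zero => simp
  | succ k ih =>
    intro hS
    have ih' := ih (fun j hj => hS j (hj.trans (Nat.le_succ k)))
    rw [Finset.sum_range_succ, Finset.sum_range_succ]
    have h1 : f k * (∑ i ∈ Finset.range k, d i) + f k * d k
        ≤ (∑ i ∈ Finset.range k, f i * d i) + f k * d k := by linarith
    have h2 : f (k + 1) * ((∑ i ∈ Finset.range k, d i) + d k)
        ≤ f k * ((∑ i ∈ Finset.range k, d i) + d k) := by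
      apply mul_le_mul_of_nonneg_right (hfm k (k+1) (Nat.le_succ k))
      have := hS (k+1) le_rfl
      rwa [Finset.sum_range_succ] at this
    nlinarith [h1, h2]

/-- If two nonincreasing sequences of positive reals satisfy that each partial product of
`x` dominates the corresponding partial product of `y`, then each partial sum of `x`
dominates the corresponding partial sum of `y`. -/
theorem partial_sums_of_partial_prods (n : ℕ) (x y : ℕ → ℝ)
    (hxpos : ∀ i < n, 0 < x i) (hypos : ∀ i < n, 0 < y i)
    (hxmono : ∀ i j, i ≤ j → j < n → x j ≤ x i)
    (hymono : ∀ i j, i ≤ j → j < n → y j ≤ y i)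
    (hprod : ∀ k ≤ n, ∏ i ∈ Finset.range k, y i ≤ ∏ i ∈ Finset.range k, x i) :
    ∀ k ≤ n, ∑ i ∈ Finset.range k, y i ≤ ∑ i ∈ Finset.range k, x i := by
  intro k hk
  rcases Nat.eq_zero_or_pos n with rfl | hn
  · interval_cases k; simp
  set d : ℕ → ℝ := fun i => Real.log (x i) - Real.log (y i) with hd
  -- partial sums of d up to j ≤ k are nonnegative
  have hS : ∀ j ≤ k, 0 ≤ ∑ i ∈ Finset.range j, d i := by
    intro j hj
    have hjn : j ≤ n := hj.trans hk
    have hxp : ∀ i ∈ Finset.range j, 0 < x i := fun i hi =>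
      hxpos i (lt_of_lt_of_le (Finset.mem_range.mp hi) hjn)
    have hyp : ∀ i ∈ Finset.range j, 0 < y i := fun i hi =>
      hypos i (lt_of_lt_of_le (Finset.mem_range.mp hi) hjn)
    have hlog : Real.log (∏ i ∈ Finset.range j, y i) ≤ Real.log (∏ i ∈ Finset.range j, x i) :=
      Real.log_le_log (Finset.prod_pos hyp) (hprod j hjn)
    rw [Real.log_prod (fun i hi => (hxp i hi).ne'),
        Real.log_prod (fun i hi => (hyp i hi).ne')] at hlog
    simp only [hd, Finset.sum_sub_distrib]
    linarith
  -- weight function, nonincreasing and nonneg everywhere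
  set f : ℕ → ℝ := fun i => y (min i (n - 1)) with hf
  have hmin : ∀ i, min i (n - 1) < n := fun i =>
    lt_of_le_of_lt (min_le_right _ _) (Nat.pred_lt hn.ne')
  have hf0 : ∀ i, 0 ≤ f i := fun i => (hypos _ (hmin i)).le
  have hfm : ∀ i j, i ≤ j → f j ≤ f i := fun i j hij =>
    hymono _ _ (min_le_min_right _ hij) (hmin j)
  have habel := abel_aux f d hf0 hfm k hS
  have hsum0 : 0 ≤ ∑ i ∈ Finset.range k, f i * d i :=
    le_trans (mul_nonneg (hf0 k) (hS k le_rfl)) habel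
  -- on range k, f agrees with y
  have hfy : ∀ i ∈ Finset.range k, f i * d i = y i * d i := by
    intro i hi
    have hik := Finset.mem_range.mp hi
    have : min i (n - 1) = i := min_eq_left (Nat.le_pred_of_lt (lt_of_lt_of_le hik hk))
    simp [hf, this]
  rw [Finset.sum_congr rfl hfy] at hsum0
  -- pointwise: y i + y i * d i ≤ x i
  have hpt : ∀ i ∈ Finset.range k, y i + y i * d i ≤ x i := by
    intro i hi
    have hik := lt_of_lt_of_le (Finset.mem_range.mp hi) hk
    have hxi := hxpos i hik
    have hyi := hypos i hik
    have h1 : d i + 1 ≤ Real.exp (d i) := Real.add_one_le_exp (d i)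
    have h2 : Real.exp (d i) = x i / y i := by
      rw [hd]
      rw [Real.exp_sub, Real.exp_log hxi, Real.exp_log hyi]
    have h3 : y i * (d i + 1) ≤ y i * (x i / y i) :=
      mul_le_mul_of_nonneg_left (h2 ▸ h1) hyi.le
    rw [mul_div_cancel₀ _ hyi.ne'] at h3
    linarith
  have := Finset.sum_le_sum hpt
  rw [Finset.sum_add_distrib] at this
  linarith
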